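/- Fix n ≥ 1 and set θ_k := (n−2k)π/2 for k = 0,…,n. Let θ ∈ [θ_n, θ_0] with θ ≠ θ_k for all k ∈ {0,…,n}, let τ > 0, and let (X_j)_{j∈ℕ} be a sequence of real symmetric n×n matrices with F(X_j) → θ. Then liminf_{j→∞} F(X_j + τI) > θ. -/

import Mathlib

open Real Filter Topology

open scoped Classical in
noncomputable def slF {n : ℕ} (X : Matrix (Fin n) (Fin n) ℝ) : ℝ :=
  if hX : X.IsHermitian then ∑ i, Real.arctan (hX.eigenvalues i) else 0

noncomputable def hess {n : ℕ} (φ : EuclideanSpace ℝ (Fin n) → ℝ)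
    (x : EuclideanSpace ℝ (Fin n)) : Matrix (Fin n) (Fin n) ℝ :=
  fun i j => iteratedFDeriv ℝ 2 φ x ![EuclideanSpace.single i 1, EuclideanSpace.single j 1]

def IsSubsolution {n : ℕ} (Ω : Set (EuclideanSpace ℝ (Fin n)))
    (v f : EuclideanSpace ℝ (Fin n) → ℝ) : Prop :=
  ∀ x ∈ Ω, ∀ φ : EuclideanSpace ℝ (Fin n) → ℝ,
    ContDiffAt ℝ 2 φ x → (∀ᶠ y in 𝓝 x, v y ≤ φ y) → φ x = v x → f x ≤ slF (hess φ x)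

def IsSupersolution {n : ℕ} (Ω : Set (EuclideanSpace ℝ (Fin n)))
    (u f : EuclideanSpace ℝ (Fin n) → ℝ) : Prop :=
  ∀ x ∈ Ω, ∀ ψ : EuclideanSpace ℝ (Fin n) → ℝ,
    ContDiffAt ℝ 2 ψ x → (∀ᶠ y in 𝓝 x, ψ y ≤ u y) → ψ x = u x → slF (hess ψ x) ≤ f x

noncomputable def vFun (n k : ℕ) (x : EuclideanSpace ℝ (Fin n)) : ℝ :=
  1/4 - ∑ i ∈ Finset.univ.filter (fun i : Fin n => (i : ℕ) < k), |x i|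
      + ∑ i ∈ Finset.univ.filter (fun i : Fin n => k ≤ (i : ℕ)), (1/2) * |x i| ^ ((3:ℝ)/2)

noncomputable def phaseTerm (t : ℝ) : ℝ :=
  if t = 0 then π / 2 else Real.arctan ((3/8) * |t| ^ (-(1:ℝ)/2))

noncomputable def fFun (n k : ℕ) (x : EuclideanSpace ℝ (Fin n)) : ℝ :=
  - ∑ i ∈ Finset.univ.filter (fun i : Fin n => (i : ℕ) < k), phaseTerm (x i)
  + ∑ i ∈ Finset.univ.filter (fun i : Fin n => k ≤ (i : ℕ)), phaseTerm (x i)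

def revVec {n : ℕ} (x : EuclideanSpace ℝ (Fin n)) : EuclideanSpace ℝ (Fin n) :=
  WithLp.toLp 2 (fun i : Fin n => x i.rev)

noncomputable def uFun (n k : ℕ) (x : EuclideanSpace ℝ (Fin n)) : ℝ :=
  - vFun n (n - k) (revVec x)

def exch (n : ℕ) : Matrix (Fin n) (Fin n) ℝ :=
  fun i j => if j = i.rev then 1 else 0

theorem slF_eq_sum {n : ℕ} {A : Matrix (Fin n) (Fin n) ℝ} (hA : A.IsHermitian) :
    slF A = ∑ i, Real.arctan (hA.eigenvalues i) := by
  unfold slF; rw [dif_pos hA]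

theorem trace_cfc'' {n : ℕ} (A : Matrix (Fin n) (Fin n) ℝ) (hA : A.IsHermitian) (f : ℝ → ℝ) :
    (hA.cfc f).trace = ∑ i, f (hA.eigenvalues i) := by
  rw [Matrix.IsHermitian.cfc, Unitary.conjStarAlgAut_apply, Matrix.trace_mul_cycle,
    Unitary.star_mul_self_of_mem (SetLike.coe_mem _), Matrix.one_mul, Matrix.trace_diagonal]
  simp

theorem slF_aux {n : ℕ} (A : Matrix (Fin n) (Fin n) ℝ) (hA : A.IsHermitian) (τ : ℝ) :
    cfc Real.arctan (A + τ • 1) = cfc (fun t => Real.arctan (t + τ)) A := by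
  have ha : IsSelfAdjoint A := hA
  have h1 : cfc (fun t => t + τ) A = A + τ • 1 := by
    rw [cfc_add A _ _ (by fun_prop) (by fun_prop), cfc_id' ℝ A, cfc_const τ A,
      Algebra.algebraMap_eq_smul_one]
  rw [← h1, ← cfc_comp Real.arctan (fun t => t + τ) A ha
    (Real.continuous_arctan.continuousOn) (by fun_prop)]
  rfl

theorem slF_shift {n : ℕ} (A : Matrix (Fin n) (Fin n) ℝ) (hA : A.IsHermitian) (τ : ℝ) :
    slF (A + τ • 1) = ∑ i, Real.arctan (hA.eigenvalues i + τ) := by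
  have hB : (A + τ • (1 : Matrix (Fin n) (Fin n) ℝ)).IsHermitian :=
    hA.add (by simp [Matrix.IsHermitian])
  rw [slF_eq_sum hB, ← trace_cfc'' _ hB, ← Matrix.IsHermitian.cfc_eq, slF_aux A hA τ,
    Matrix.IsHermitian.cfc_eq hA, trace_cfc'' _ hA]

theorem slF_le {n : ℕ} (Y : Matrix (Fin n) (Fin n) ℝ) : slF Y ≤ (n:ℝ) * (π/2) := by
  unfold slF
  split
  · refine le_trans (Finset.sum_le_sum fun i _ => (Real.arctan_lt_pi_div_two _).le) ?_
    simp [Finset.card_univ]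
  · positivity

theorem stmt17 (n : ℕ) (hn : 1 ≤ n) (θ : ℝ)
    (hθ1 : -((n : ℝ) * (π / 2)) ≤ θ) (hθ2 : θ ≤ (n : ℝ) * (π / 2))
    (hθk : ∀ k ≤ n, θ ≠ ((n : ℝ) - 2 * k) * (π / 2))
    (τ : ℝ) (hτ : 0 < τ)
    (X : ℕ → Matrix (Fin n) (Fin n) ℝ) (hX : ∀ j, (X j).IsHermitian)
    (h1 : Tendsto (fun j => slF (X j)) atTop (𝓝 θ)) :
    θ < Filter.liminf (fun j => slF (X j + τ • (1 : Matrix (Fin n) (Fin n) ℝ))) atTop := by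
  classical
  -- ε : distance to the nearest special value
  set T : Finset ℝ := (Finset.range (n+1)).image (fun k : ℕ => |θ - ((n:ℝ) - 2 * (k:ℝ)) * (π / 2)|)
    with hT
  have hTne : T.Nonempty := ⟨_, Finset.mem_image.2 ⟨0, by simp, rfl⟩⟩
  set ε := T.min' hTne with hεdef
  have hε : 0 < ε := by
    obtain ⟨x, hx, hx2⟩ := Finset.mem_image.1 (T.min'_mem hTne)
    rw [hεdef, ← hx2]
    exact abs_pos.2 (sub_ne_zero.2 (hθk x (Nat.lt_succ_iff.mp (Finset.mem_range.1 hx))))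
  have hεle : ∀ k, k ≤ n → ε ≤ |θ - ((n:ℝ) - 2 * k) * (π / 2)| := fun k hk =>
    T.min'_le _ (Finset.mem_image.2 ⟨k, Finset.mem_range.2 (Nat.lt_succ_of_le hk), rfl⟩)
  have hn' : (0:ℝ) < n := by exact_mod_cast Nat.lt_of_lt_of_le Nat.zero_lt_one hn
  -- choose R
  set η := ε / (2 * ((n:ℝ) + 1)) with hη
  have hηpos : 0 < η := by positivity
  obtain ⟨R, hR0, hRη⟩ : ∃ R : ℝ, 0 ≤ R ∧ π / 2 - Real.arctan R < η := by
    have h := (Real.tendsto_arctan_atTop.mono_right nhdsWithin_le_nhds)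
    have h2 := Metric.tendsto_nhds.mp h η hηpos
    obtain ⟨R, hR1, hR2⟩ := (h2.and (eventually_ge_atTop (0:ℝ))).exists
    refine ⟨R, hR2, ?_⟩
    rw [Real.dist_eq, abs_of_nonpos (by linarith [Real.arctan_lt_pi_div_two R]), neg_sub] at hR1
    linarith
  have hRkey : (n:ℝ) * (π/2 - Real.arctan R) < ε / 2 := by
    have h1 : (n:ℝ) * (π/2 - Real.arctan R) ≤ (n:ℝ) * η :=
      mul_le_mul_of_nonneg_left hRη.le hn'.le
    have h2 : (n:ℝ) * η < ε / 2 := by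
      rw [hη, mul_comm, div_mul_eq_mul_div, div_lt_div_iff₀ (by positivity) (by norm_num)]
      nlinarith
    linarith
  -- c : minimum increment on [-R, R]
  obtain ⟨l0, hl0mem, hl0min⟩ :=
    (isCompact_Icc (a := -R) (b := R)).exists_isMinOn ⟨0, by constructor <;> linarith⟩
      (((Real.continuous_arctan.comp (continuous_id.add continuous_const)).sub
        Real.continuous_arctan).continuousOn)
  set c := Real.arctan (l0 + τ) - Real.arctan l0 with hc
  have hcpos : 0 < c := sub_pos.2 (Real.arctan_strictMono (by linarith))
  have hcmin : ∀ x ∈ Set.Icc (-R) R, c ≤ Real.arctan (x + τ) - Real.arctan x :=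
    fun x hx => hl0min hx
  set δ := min (ε/2) (c/2) with hδ
  have hδpos : 0 < δ := lt_min (by linarith) (by linarith)
  have hev : ∀ᶠ j in atTop, |slF (X j) - θ| < δ := by
    have := Metric.tendsto_nhds.mp h1 δ hδpos
    simpa [Real.dist_eq] using this
  have hkey : ∀ᶠ j in atTop, θ + c/2 ≤ slF (X j + τ • (1 : Matrix (Fin n) (Fin n) ℝ)) := by
    filter_upwards [hev] with j hj
    set d := (hX j).eigenvalues with hd
    have hslF : slF (X j) = ∑ i, Real.arctan (d i) := slF_eq_sum (hX j)
    have hslF2 : slF (X j + τ • (1 : Matrix (Fin n) (Fin n) ℝ))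
        = ∑ i, Real.arctan (d i + τ) := slF_shift _ (hX j) τ
    have hbdd : ∃ i, |d i| ≤ R := by
      by_contra hcon
      push_neg at hcon
      set m := (Finset.univ.filter (fun i : Fin n => d i < 0)).card with hm
      have hmn : m ≤ n := le_trans (Finset.card_filter_le _ _) (by simp)
      have hsum : ∑ i : Fin n, (if d i < 0 then -(π/2) else (π/2))
          = ((n:ℝ) - 2*m) * (π/2) := by
        rw [Finset.sum_ite, Finset.sum_const, Finset.sum_const]
        have h2 : (Finset.univ.filter (fun i : Fin n => ¬ d i < 0)).card = n - m := by
          have h3 := Finset.card_filter_add_card_filter_not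
            (s := (Finset.univ : Finset (Fin n))) (p := fun i => d i < 0)
          simp only [Finset.card_univ, Fintype.card_fin] at h3
          omega
        rw [h2, ← hm]
        have : ((n - m : ℕ) : ℝ) = (n:ℝ) - m := by
          push_cast [Nat.cast_sub hmn]; ring
        simp only [nsmul_eq_mul, this]
        ring
      have hdist : |slF (X j) - ((n:ℝ) - 2*m) * (π/2)| ≤ (n:ℝ) * (π/2 - Real.arctan R) := by
        rw [hslF, ← hsum, ← Finset.sum_sub_distrib]
        refine le_trans (Finset.abs_sum_le_sum_abs _ _) ?_
        have hterm : ∀ i : Fin n,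
            |Real.arctan (d i) - (if d i < 0 then -(π/2) else (π/2))|
              ≤ π/2 - Real.arctan R := by
          intro i
          by_cases hdi : d i < 0
          · simp only [if_pos hdi]
            have h1 : d i < -R := by
              have := hcon i; rw [abs_of_neg hdi] at this; linarith
            have h2 : Real.arctan (d i) ≤ Real.arctan (-R) :=
              Real.arctan_strictMono.monotone h1.le
            rw [Real.arctan_neg] at h2
            have h3 := Real.neg_pi_div_two_lt_arctan (d i)
            rw [sub_neg_eq_add, abs_of_nonneg (by linarith)]
            linarith
          · simp only [if_neg hdi]
            push_neg at hdi
            have h1 : R < d i := by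
              have := hcon i; rwa [abs_of_nonneg hdi] at this
            have h2 := Real.arctan_strictMono h1
            have h3 := Real.arctan_lt_pi_div_two (d i)
            rw [abs_of_nonpos (by linarith), neg_sub]
            linarith
        refine le_trans (Finset.sum_le_sum fun i _ => hterm i) ?_
        simp [Finset.card_univ]
        nlinarith [hn']
      have hfinal : |θ - ((n:ℝ) - 2*m)*(π/2)| < ε := by
        have habs : |θ - slF (X j)| = |slF (X j) - θ| := abs_sub_comm _ _
        calc |θ - ((n:ℝ) - 2*m)*(π/2)|
            ≤ |θ - slF (X j)| + |slF (X j) - ((n:ℝ) - 2*m)*(π/2)| := abs_sub_le _ _ _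
          _ < ε := by
              have h4 : |slF (X j) - θ| < ε/2 := lt_of_lt_of_le hj (min_le_left _ _)
              rw [habs]; linarith
      exact absurd hfinal (not_lt.2 (hεle m hmn))
    obtain ⟨i0, hi0⟩ := hbdd
    have hstep : ∑ i, Real.arctan (d i) + c ≤ ∑ i, Real.arctan (d i + τ) := by
      have h1 : c ≤ ∑ i, (Real.arctan (d i + τ) - Real.arctan (d i)) := by
        refine le_trans (hcmin (d i0) (Set.mem_Icc.2 (abs_le.1 hi0))) ?_
        exact Finset.single_le_sum (f := fun i => Real.arctan (d i + τ) - Real.arctan (d i))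
          (fun i _ => sub_nonneg.2 (Real.arctan_strictMono.monotone (by linarith)))
          (Finset.mem_univ i0)
      rw [Finset.sum_sub_distrib] at h1; linarith
    have hlow : θ - δ < slF (X j) := by
      have := abs_sub_lt_iff.1 hj
      linarith [this.2]
    have hδc : δ ≤ c/2 := min_le_right _ _
    rw [hslF2]
    rw [hslF] at hlow
    linarith
  have hcb : IsCoboundedUnder (· ≥ ·) atTop
      (fun j => slF (X j + τ • (1 : Matrix (Fin n) (Fin n) ℝ))) := by
    refine Filter.IsBoundedUnder.isCoboundedUnder_ge ⟨(n:ℝ)*(π/2), ?_⟩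
    exact eventually_map.2 (Eventually.of_forall fun j => slF_le _)
  have := Filter.le_liminf_of_le hcb hkey
  linarith
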